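/- arXiv:1502.02505 — 2 statements merged into one kernel-verified Lean document; each statement's English description precedes it below -/
import Mathlib

section
/- Let l1, l2, l3, l4 be integers, each at least 2, and set L = l1 + l2 + l3 + l4. Then ζ(l1,l2,l3,l4) + ζ(l2,l3,l4,l1) + ζ(l3,l4,l1,l2) + ζ(l4,l1,l2,l3) = ζ(l1)ζ(l2)ζ(l3)ζ(l4) − [ζ(l1,l2)ζ(l3)ζ(l4) + ζ(l2,l3)ζ(l4)ζ(l1) + ζ(l3,l4)ζ(l1)ζ(l2) + ζ(l4,l1)ζ(l2)ζ(l3)] + ζ(l1,l2)ζ(l3,l4) + ζ(l2,l3)ζ(l4,l1) + ζ(l1,l2,l3)ζ(l4) + ζ(l2,l3,l4)ζ(l1) + ζ(l3,l4,l1)ζ(l2) + ζ(l4,l1,l2)ζ(l3) − ζ(L). (Depth-4 case of Theorem 1 of the paper, restricted to convergent indices, where the characteristic factor equals 1.) -/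
open Classical in
/-- The multiple zeta value `ζ(l 0, l 1, …, l (n-1)) =
∑_{m 0 > m 1 > ⋯ > m (n-1) ≥ 1} ∏ i, 1 / (m i) ^ (l i)`. -/
noncomputable def mzv {n : ℕ} (l : Fin n → ℕ) : ℝ :=
  ∑' m : Fin n → ℕ,
    if StrictAnti m ∧ ∀ i, 1 ≤ m i then ∏ i, (1 : ℝ) / (m i : ℝ) ^ (l i) else 0

open Classical

/-! ### Basic summand functions -/

noncomputable def zg (k : ℕ) (m : ℕ) : ℝ := if 1 ≤ m then 1 / (m:ℝ) ^ k else 0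

noncomputable def W2 (k1 k2 : ℕ) (p : ℕ × ℕ) : ℝ := zg k1 p.1 * zg k2 p.2
noncomputable def W3 (k1 k2 k3 : ℕ) (p : ℕ × ℕ × ℕ) : ℝ := zg k1 p.1 * W2 k2 k3 p.2
noncomputable def W4 (k1 k2 k3 k4 : ℕ) (p : ℕ × ℕ × ℕ × ℕ) : ℝ :=
  zg k1 p.1 * W3 k2 k3 k4 p.2

lemma zg_nonneg (k m : ℕ) : 0 ≤ zg k m := by unfold zg; split <;> positivity

lemma W2_nonneg (k1 k2 : ℕ) (p : ℕ × ℕ) : 0 ≤ W2 k1 k2 p :=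
  mul_nonneg (zg_nonneg _ _) (zg_nonneg _ _)

lemma W3_nonneg (k1 k2 k3 : ℕ) (p : ℕ × ℕ × ℕ) : 0 ≤ W3 k1 k2 k3 p :=
  mul_nonneg (zg_nonneg _ _) (W2_nonneg _ _ _)

lemma W4_nonneg (k1 k2 k3 k4 : ℕ) (p : ℕ × ℕ × ℕ × ℕ) : 0 ≤ W4 k1 k2 k3 k4 p :=
  mul_nonneg (zg_nonneg _ _) (W3_nonneg _ _ _ _)

lemma zg_summable {k : ℕ} (hk : 2 ≤ k) : Summable (zg k) := by
  apply Summable.of_nonneg_of_le (zg_nonneg k) (f := fun m : ℕ => 1 / (m:ℝ) ^ k)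
  · intro m; unfold zg; split
    · exact le_refl _
    · positivity
  · exact Real.summable_one_div_nat_pow.mpr (by omega)

lemma W2_summable {k1 k2 : ℕ} (h1 : 2 ≤ k1) (h2 : 2 ≤ k2) : Summable (W2 k1 k2) :=
  Summable.mul_of_nonneg (zg_summable h1) (zg_summable h2)
    (fun _ => zg_nonneg _ _) (fun _ => zg_nonneg _ _)

lemma W3_summable {k1 k2 k3 : ℕ} (h1 : 2 ≤ k1) (h2 : 2 ≤ k2) (h3 : 2 ≤ k3) :
    Summable (W3 k1 k2 k3) :=
  Summable.mul_of_nonneg (zg_summable h1) (W2_summable h2 h3)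
    (fun _ => zg_nonneg _ _) (fun _ => W2_nonneg _ _ _)

lemma W4_summable {k1 k2 k3 k4 : ℕ} (h1 : 2 ≤ k1) (h2 : 2 ≤ k2) (h3 : 2 ≤ k3)
    (h4 : 2 ≤ k4) : Summable (W4 k1 k2 k3 k4) :=
  Summable.mul_of_nonneg (zg_summable h1) (W3_summable h2 h3 h4)
    (fun _ => zg_nonneg _ _) (fun _ => W3_nonneg _ _ _ _)

lemma summable_ite {α : Type*} {f : α → ℝ} (hf : Summable f) (h0 : ∀ x, 0 ≤ f x)
    (P : α → Prop) [DecidablePred P] : Summable (fun x => if P x then f x else 0) := by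
  apply Summable.of_nonneg_of_le _ _ hf
  · intro x; split
    · exact h0 x
    · exact le_refl _
  · intro x; split
    · exact le_refl _
    · exact h0 x

lemma ite_nonneg' {α : Type*} {f : α → ℝ} (h0 : ∀ x, 0 ≤ f x)
    (P : α → Prop) [DecidablePred P] (x : α) : 0 ≤ if P x then f x else 0 := by
  split
  · exact h0 x
  · exact le_refl _

lemma tsum_split {α β : Type*} (f : α → ℝ) (h : β → ℝ) (hf : Summable f) (hh : Summable h)
    (hf0 : ∀ x, 0 ≤ f x) (hh0 : ∀ x, 0 ≤ h x) :
    ∑' z : α × β, f z.1 * h z.2 = (∑' x, f x) * (∑' y, h y) := by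
  refine (tsum_mul_tsum_of_summable_norm ?_ ?_).symm
  · simpa [Real.norm_eq_abs, abs_of_nonneg, hf0] using hf.abs
  · simpa [Real.norm_eq_abs, abs_of_nonneg, hh0] using hh.abs

/-! ### StrictAnti on small `Fin` types -/

lemma sa2 {a b : ℕ} : StrictAnti ![a,b] ↔ b < a := by
  constructor
  · intro h; simpa using h (show (0:Fin 2) < 1 by decide)
  · intro h i j hij; fin_cases i <;> fin_cases j <;> simp_all

lemma sa3 {a b c : ℕ} : StrictAnti ![a,b,c] ↔ b < a ∧ c < b := by
  constructor
  · intro h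
    exact ⟨by simpa using h (show (0:Fin 3) < 1 by decide),
           by simpa using h (show (1:Fin 3) < 2 by decide)⟩
  · intro h i j hij; fin_cases i <;> fin_cases j <;> simp_all <;> omega

lemma sa4 {a b c d : ℕ} : StrictAnti ![a,b,c,d] ↔ b < a ∧ c < b ∧ d < c := by
  constructor
  · intro h
    exact ⟨by simpa using h (show (0:Fin 4) < 1 by decide),
           by simpa using h (show (1:Fin 4) < 2 by decide),
           by simpa using h (show (2:Fin 4) < 3 by decide)⟩
  · intro h i j hij; fin_cases i <;> fin_cases j <;> simp_all <;> omega

def eqv2 : ℕ × ℕ ≃ (Fin 2 → ℕ) where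
  toFun p := ![p.1, p.2]
  invFun m := (m 0, m 1)
  left_inv p := rfl
  right_inv m := by funext i; fin_cases i <;> rfl

lemma eqv2_apply (p : ℕ × ℕ) : eqv2 p = ![p.1, p.2] := rfl

def eqv3 : ℕ × ℕ × ℕ ≃ (Fin 3 → ℕ) where
  toFun p := ![p.1, p.2.1, p.2.2]
  invFun m := (m 0, m 1, m 2)
  left_inv p := rfl
  right_inv m := by funext i; fin_cases i <;> rfl

lemma eqv3_apply (p : ℕ × ℕ × ℕ) : eqv3 p = ![p.1, p.2.1, p.2.2] := rfl

def eqv4 : ℕ × ℕ × ℕ × ℕ ≃ (Fin 4 → ℕ) where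
  toFun p := ![p.1, p.2.1, p.2.2.1, p.2.2.2]
  invFun m := (m 0, m 1, m 2, m 3)
  left_inv p := rfl
  right_inv m := by funext i; fin_cases i <;> rfl

lemma eqv4_apply (p : ℕ × ℕ × ℕ × ℕ) : eqv4 p = ![p.1, p.2.1, p.2.2.1, p.2.2.2] := rfl

/-! ### `mzv` in terms of tsums over tuples of naturals -/

lemma mzv_one (k : ℕ) : mzv ![k] = ∑' m : ℕ, zg k m := by
  rw [mzv, ← (Equiv.funUnique (Fin 1) ℕ).symm.tsum_eq]
  apply tsum_congr
  intro n
  have hsa : StrictAnti (uniqueElim n : Fin 1 → ℕ) := fun i j h => absurd h (by omega)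
  simp [zg, Equiv.funUnique, hsa]

lemma mzv_two (k1 k2 : ℕ) :
    mzv ![k1, k2] = ∑' p : ℕ × ℕ, if p.2 < p.1 then zg k1 p.1 * zg k2 p.2 else 0 := by
  rw [mzv, ← eqv2.tsum_eq]
  apply tsum_congr
  intro p
  simp only [eqv2_apply, sa2, Fin.prod_univ_two, Fin.forall_fin_two]
  simp only [Matrix.cons_val_zero, Matrix.cons_val_one, Matrix.head_cons, zg]
  by_cases hab : p.2 < p.1 <;> by_cases h1 : 1 ≤ p.1 <;> by_cases h2 : 1 ≤ p.2 <;>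
    simp_all <;> omega

lemma mzv_three (k1 k2 k3 : ℕ) :
    mzv ![k1, k2, k3] = ∑' p : ℕ × ℕ × ℕ,
      if p.2.1 < p.1 ∧ p.2.2 < p.2.1 then zg k1 p.1 * zg k2 p.2.1 * zg k3 p.2.2 else 0 := by
  rw [mzv, ← eqv3.tsum_eq]
  apply tsum_congr
  intro p
  simp only [eqv3_apply, sa3, Fin.prod_univ_three, Fin.forall_fin_succ,
    Fin.forall_fin_two]
  simp only [Matrix.cons_val_zero, Matrix.cons_val_one, Matrix.head_cons, zg,
    Matrix.cons_val_two, Matrix.tail_cons, Fin.succ_zero_eq_one, Fin.succ_one_eq_two]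
  by_cases hab : p.2.1 < p.1 <;> by_cases hbc : p.2.2 < p.2.1 <;>
    by_cases h1 : 1 ≤ p.1 <;> by_cases h2 : 1 ≤ p.2.1 <;> by_cases h3 : 1 ≤ p.2.2 <;>
    simp_all <;> omega

lemma all4 {P : ℕ → Prop} {a b c d : ℕ} :
    (∀ i, P (![a,b,c,d] i)) ↔ P a ∧ P b ∧ P c ∧ P d := by
  constructor
  · intro h; exact ⟨h 0, h 1, h 2, h 3⟩
  · intro h i
    fin_cases i
    · exact h.1
    · exact h.2.1
    · exact h.2.2.1
    · exact h.2.2.2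

lemma mzv_four (k1 k2 k3 k4 : ℕ) :
    mzv ![k1, k2, k3, k4] = ∑' p : ℕ × ℕ × ℕ × ℕ,
      if p.2.1 < p.1 ∧ p.2.2.1 < p.2.1 ∧ p.2.2.2 < p.2.2.1 then
        zg k1 p.1 * zg k2 p.2.1 * zg k3 p.2.2.1 * zg k4 p.2.2.2 else 0 := by
  rw [mzv, ← eqv4.tsum_eq]
  apply tsum_congr
  intro p
  obtain ⟨a, b, c, d⟩ := p
  simp only [eqv4_apply, sa4, all4, Fin.prod_univ_four,
    Matrix.cons_val_zero, Matrix.cons_val_one, Matrix.head_cons,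
    Matrix.cons_val_two, Matrix.tail_cons, Matrix.cons_val_three]
  by_cases hch : b < a ∧ c < b ∧ d < c
  · by_cases hd : 1 ≤ d
    · have : 1 ≤ a ∧ 1 ≤ b ∧ 1 ≤ c := by omega
      simp [zg, hch, hd, this.1, this.2.1, this.2.2]
    · simp [zg, hch, hd]
  · simp [hch]

/-! ### Block factorizations over `ℕ × ℕ × ℕ × ℕ` -/

def e22 : (ℕ × ℕ) × (ℕ × ℕ) ≃ ℕ × ℕ × ℕ × ℕ where
  toFun z := (z.1.1, z.1.2, z.2.1, z.2.2)
  invFun q := ((q.1, q.2.1), (q.2.2.1, q.2.2.2))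
  left_inv z := rfl
  right_inv q := rfl

lemma e22_apply (z : (ℕ × ℕ) × (ℕ × ℕ)) : e22 z = (z.1.1, z.1.2, z.2.1, z.2.2) :=
  by exact Eq.trans rfl rfl

def e31 : (ℕ × ℕ × ℕ) × ℕ ≃ ℕ × ℕ × ℕ × ℕ where
  toFun z := (z.1.1, z.1.2.1, z.1.2.2, z.2)
  invFun q := ((q.1, q.2.1, q.2.2.1), q.2.2.2)
  left_inv z := rfl
  right_inv q := rfl

lemma e31_apply (z : (ℕ × ℕ × ℕ) × ℕ) : e31 z = (z.1.1, z.1.2.1, z.1.2.2, z.2) :=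
  by exact Eq.trans rfl rfl

variable {k1 k2 k3 k4 : ℕ}

/-- full product -/
lemma G5 (h1 : 2 ≤ k1) (h2 : 2 ≤ k2) (h3 : 2 ≤ k3) (h4 : 2 ≤ k4) :
    ∑' q : ℕ × ℕ × ℕ × ℕ, W4 k1 k2 k3 k4 q
      = mzv ![k1] * mzv ![k2] * mzv ![k3] * mzv ![k4] := by
  rw [mzv_one, mzv_one, mzv_one, mzv_one]
  rw [show (fun q : ℕ × ℕ × ℕ × ℕ => W4 k1 k2 k3 k4 q)
      = fun q : ℕ × (ℕ × ℕ × ℕ) => zg k1 q.1 * W3 k2 k3 k4 q.2 from rfl]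
  rw [tsum_split _ _ (zg_summable h1) (W3_summable h2 h3 h4)
    (fun _ => zg_nonneg _ _) (fun _ => W3_nonneg _ _ _ _)]
  rw [show (fun q : ℕ × ℕ × ℕ => W3 k2 k3 k4 q)
      = fun q : ℕ × (ℕ × ℕ) => zg k2 q.1 * W2 k3 k4 q.2 from rfl]
  rw [tsum_split _ _ (zg_summable h2) (W2_summable h3 h4)
    (fun _ => zg_nonneg _ _) (fun _ => W2_nonneg _ _ _)]
  rw [show (fun q : ℕ × ℕ => W2 k3 k4 q)
      = fun q : ℕ × ℕ => zg k3 q.1 * zg k4 q.2 from rfl]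
  rw [tsum_split _ _ (zg_summable h3) (zg_summable h4)
    (fun _ => zg_nonneg _ _) (fun _ => zg_nonneg _ _)]
  ring

/-- pair × single × single -/
lemma G3 (h1 : 2 ≤ k1) (h2 : 2 ≤ k2) (h3 : 2 ≤ k3) (h4 : 2 ≤ k4) :
    ∑' q : ℕ × ℕ × ℕ × ℕ, (if q.2.1 < q.1 then W4 k1 k2 k3 k4 q else 0)
      = mzv ![k1, k2] * mzv ![k3] * mzv ![k4] := by
  rw [← e22.tsum_eq]
  have hpt : ∀ z : (ℕ × ℕ) × (ℕ × ℕ),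
      (if (e22 z).2.1 < (e22 z).1 then W4 k1 k2 k3 k4 (e22 z) else 0)
        = (fun p : ℕ × ℕ => if p.2 < p.1 then zg k1 p.1 * zg k2 p.2 else 0) z.1
          * W2 k3 k4 z.2 := by
    intro z
    simp only [e22_apply, W4, W3, W2]
    split_ifs with h
    · ring
    · rw [zero_mul]
  rw [tsum_congr hpt]
  rw [tsum_split (fun p : ℕ × ℕ => if p.2 < p.1 then zg k1 p.1 * zg k2 p.2 else 0)
    (W2 k3 k4)
    (by exact summable_ite (W2_summable h1 h2) (W2_nonneg _ _) _)
    (W2_summable h3 h4)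
    (by exact ite_nonneg' (W2_nonneg _ _) _) (fun _ => W2_nonneg _ _ _)]
  rw [show (fun q : ℕ × ℕ => W2 k3 k4 q)
      = fun q : ℕ × ℕ => zg k3 q.1 * zg k4 q.2 from rfl]
  rw [tsum_split _ _ (zg_summable h3) (zg_summable h4)
    (fun _ => zg_nonneg _ _) (fun _ => zg_nonneg _ _)]
  rw [mzv_two, mzv_one, mzv_one]; ring

/-- pair × pair -/
lemma G2 (h1 : 2 ≤ k1) (h2 : 2 ≤ k2) (h3 : 2 ≤ k3) (h4 : 2 ≤ k4) :
    ∑' q : ℕ × ℕ × ℕ × ℕ, (if q.2.1 < q.1 ∧ q.2.2.2 < q.2.2.1 then W4 k1 k2 k3 k4 q else 0)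
      = mzv ![k1, k2] * mzv ![k3, k4] := by
  rw [← e22.tsum_eq]
  have hpt : ∀ z : (ℕ × ℕ) × (ℕ × ℕ),
      (if (e22 z).2.1 < (e22 z).1 ∧ (e22 z).2.2.2 < (e22 z).2.2.1 then
          W4 k1 k2 k3 k4 (e22 z) else 0)
        = (fun p : ℕ × ℕ => if p.2 < p.1 then zg k1 p.1 * zg k2 p.2 else 0) z.1
          * (fun p : ℕ × ℕ => if p.2 < p.1 then zg k3 p.1 * zg k4 p.2 else 0) z.2 := by
    intro z
    simp only [e22_apply, W4, W3, W2]
    by_cases ha : z.1.2 < z.1.1 <;> by_cases hb : z.2.2 < z.2.1 <;> simp [ha, hb] <;> ring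
  rw [tsum_congr hpt]
  rw [tsum_split (fun p : ℕ × ℕ => if p.2 < p.1 then zg k1 p.1 * zg k2 p.2 else 0)
    (fun p : ℕ × ℕ => if p.2 < p.1 then zg k3 p.1 * zg k4 p.2 else 0)
    (by exact summable_ite (W2_summable h1 h2) (W2_nonneg _ _) _)
    (by exact summable_ite (W2_summable h3 h4) (W2_nonneg _ _) _)
    (by exact ite_nonneg' (W2_nonneg _ _) _) (by exact ite_nonneg' (W2_nonneg _ _) _)]
  rw [mzv_two, mzv_two]

/-- triple × single -/
lemma G4 (h1 : 2 ≤ k1) (h2 : 2 ≤ k2) (h3 : 2 ≤ k3) (h4 : 2 ≤ k4) :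
    ∑' q : ℕ × ℕ × ℕ × ℕ, (if q.2.1 < q.1 ∧ q.2.2.1 < q.2.1 then W4 k1 k2 k3 k4 q else 0)
      = mzv ![k1, k2, k3] * mzv ![k4] := by
  rw [← e31.tsum_eq]
  have hpt : ∀ z : (ℕ × ℕ × ℕ) × ℕ,
      (if (e31 z).2.1 < (e31 z).1 ∧ (e31 z).2.2.1 < (e31 z).2.1 then
          W4 k1 k2 k3 k4 (e31 z) else 0)
        = (fun p : ℕ × ℕ × ℕ => if p.2.1 < p.1 ∧ p.2.2 < p.2.1 then
            zg k1 p.1 * zg k2 p.2.1 * zg k3 p.2.2 else 0) z.1 * zg k4 z.2 := by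
    intro z
    simp only [e31_apply, W4, W3, W2]
    split_ifs with h
    · ring
    · rw [zero_mul]
  rw [tsum_congr hpt]
  rw [tsum_split (fun p : ℕ × ℕ × ℕ => if p.2.1 < p.1 ∧ p.2.2 < p.2.1 then
      zg k1 p.1 * zg k2 p.2.1 * zg k3 p.2.2 else 0) (zg k4)
    (by
      refine summable_ite (W3_summable h1 h2 h3) (W3_nonneg _ _ _) (fun p => p.2.1 < p.1 ∧ p.2.2 < p.2.1) |>.congr ?_
      intro p; simp only [W3, W2]; split_ifs <;> ring)
    (zg_summable h4)
    (by
      intro p; split_ifs with h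
      · have := W3_nonneg k1 k2 k3 p; simp only [W3, W2] at this; linarith [this]
      · exact le_refl _)
    (fun _ => zg_nonneg _ _)]
  rw [mzv_three, mzv_one]

/-- diagonal -/
lemma G6 :
    ∑' q : ℕ × ℕ × ℕ × ℕ,
        (if q.1 = q.2.1 ∧ q.2.1 = q.2.2.1 ∧ q.2.2.1 = q.2.2.2 then W4 k1 k2 k3 k4 q else 0)
      = mzv ![k1 + k2 + k3 + k4] := by
  rw [mzv_one]
  have hinj : Function.Injective (fun m : ℕ => ((m, m, m, m) : ℕ × ℕ × ℕ × ℕ)) := by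
    intro x y h; exact congrArg Prod.fst h
  rw [← hinj.tsum_eq]
  · apply tsum_congr
    intro m
    simp only [W4, W3, W2, zg]
    by_cases hm : 1 ≤ m
    · simp [hm, pow_add]
      ring
    · simp [hm]
  · intro q hq
    rcases q with ⟨a, b, c, d⟩
    by_cases h : a = b ∧ b = c ∧ c = d
    · obtain ⟨rfl, rfl, rfl⟩ := h
      exact ⟨a, rfl⟩
    · exfalso; apply hq; simp [Function.support, h]

/-- chain of length 4 -/
lemma G1 (k1 k2 k3 k4 : ℕ) :
    ∑' q : ℕ × ℕ × ℕ × ℕ,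
        (if q.2.1 < q.1 ∧ q.2.2.1 < q.2.1 ∧ q.2.2.2 < q.2.2.1 then W4 k1 k2 k3 k4 q else 0)
      = mzv ![k1, k2, k3, k4] := by
  rw [mzv_four]
  apply tsum_congr
  intro q
  simp only [W4, W3, W2]
  split_ifs with h
  · ring
  · rfl

def pi1 : ℕ × ℕ × ℕ × ℕ ≃ ℕ × ℕ × ℕ × ℕ where
  toFun q := (q.2.2.2, q.1, q.2.1, q.2.2.1)
  invFun q := (q.2.1, q.2.2.1, q.2.2.2, q.1)
  left_inv q := rfl
  right_inv q := rfl

lemma pi1_apply (q : ℕ × ℕ × ℕ × ℕ) : pi1 q = (q.2.2.2, q.1, q.2.1, q.2.2.1) :=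
  by exact Eq.trans rfl rfl

def pi2 : ℕ × ℕ × ℕ × ℕ ≃ ℕ × ℕ × ℕ × ℕ where
  toFun q := (q.2.2.1, q.2.2.2, q.1, q.2.1)
  invFun q := (q.2.2.1, q.2.2.2, q.1, q.2.1)
  left_inv q := rfl
  right_inv q := rfl

lemma pi2_apply (q : ℕ × ℕ × ℕ × ℕ) : pi2 q = (q.2.2.1, q.2.2.2, q.1, q.2.1) :=
  by exact Eq.trans rfl rfl

def pi3 : ℕ × ℕ × ℕ × ℕ ≃ ℕ × ℕ × ℕ × ℕ where
  toFun q := (q.2.1, q.2.2.1, q.2.2.2, q.1)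
  invFun q := (q.2.2.2, q.1, q.2.1, q.2.2.1)
  left_inv q := rfl
  right_inv q := rfl

lemma pi3_apply (q : ℕ × ℕ × ℕ × ℕ) : pi3 q = (q.2.1, q.2.2.1, q.2.2.2, q.1) :=
  by exact Eq.trans rfl rfl

variable {l1 l2 l3 l4 : ℕ}

lemma Tcb1 (h1 : 2 ≤ l1) (h2 : 2 ≤ l2) (h3 : 2 ≤ l3) (h4 : 2 ≤ l4) :
    ∑' q : ℕ × ℕ × ℕ × ℕ, (if q.2.2.1 < q.2.1 then W4 l1 l2 l3 l4 q else 0)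
      = mzv ![l2, l3] * mzv ![l4] * mzv ![l1] := by
  rw [← pi1.tsum_eq (fun q : ℕ × ℕ × ℕ × ℕ => if q.2.2.1 < q.2.1 then W4 l1 l2 l3 l4 q else 0)]
  have hpt : ∀ q : ℕ × ℕ × ℕ × ℕ,
      (fun q : ℕ × ℕ × ℕ × ℕ => if q.2.2.1 < q.2.1 then W4 l1 l2 l3 l4 q else 0) (pi1 q)
        = (if q.2.1 < q.1 then W4 l2 l3 l4 l1 q else 0) := by
    intro q
    obtain ⟨a, b, c, d⟩ := q
    simp only [pi1_apply, W4, W3, W2]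
    split_ifs with h
    · ring
    · rfl
  rw [tsum_congr hpt]
  exact G3 h2 h3 h4 h1

lemma Tcbad (h1 : 2 ≤ l1) (h2 : 2 ≤ l2) (h3 : 2 ≤ l3) (h4 : 2 ≤ l4) :
    ∑' q : ℕ × ℕ × ℕ × ℕ, (if q.2.2.1 < q.2.1 ∧ q.1 < q.2.2.2 then W4 l1 l2 l3 l4 q else 0)
      = mzv ![l2, l3] * mzv ![l4, l1] := by
  rw [← pi1.tsum_eq (fun q : ℕ × ℕ × ℕ × ℕ => if q.2.2.1 < q.2.1 ∧ q.1 < q.2.2.2 then W4 l1 l2 l3 l4 q else 0)]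
  have hpt : ∀ q : ℕ × ℕ × ℕ × ℕ,
      (fun q : ℕ × ℕ × ℕ × ℕ => if q.2.2.1 < q.2.1 ∧ q.1 < q.2.2.2 then W4 l1 l2 l3 l4 q else 0) (pi1 q)
        = (if q.2.1 < q.1 ∧ q.2.2.2 < q.2.2.1 then W4 l2 l3 l4 l1 q else 0) := by
    intro q
    obtain ⟨a, b, c, d⟩ := q
    simp only [pi1_apply, W4, W3, W2]
    split_ifs with h
    · ring
    · rfl
  rw [tsum_congr hpt]
  exact G2 h2 h3 h4 h1

lemma Tcbdc (h1 : 2 ≤ l1) (h2 : 2 ≤ l2) (h3 : 2 ≤ l3) (h4 : 2 ≤ l4) :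
    ∑' q : ℕ × ℕ × ℕ × ℕ, (if q.2.2.1 < q.2.1 ∧ q.2.2.2 < q.2.2.1 then W4 l1 l2 l3 l4 q else 0)
      = mzv ![l2, l3, l4] * mzv ![l1] := by
  rw [← pi1.tsum_eq (fun q : ℕ × ℕ × ℕ × ℕ => if q.2.2.1 < q.2.1 ∧ q.2.2.2 < q.2.2.1 then W4 l1 l2 l3 l4 q else 0)]
  have hpt : ∀ q : ℕ × ℕ × ℕ × ℕ,
      (fun q : ℕ × ℕ × ℕ × ℕ => if q.2.2.1 < q.2.1 ∧ q.2.2.2 < q.2.2.1 then W4 l1 l2 l3 l4 q else 0) (pi1 q)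
        = (if q.2.1 < q.1 ∧ q.2.2.1 < q.2.1 then W4 l2 l3 l4 l1 q else 0) := by
    intro q
    obtain ⟨a, b, c, d⟩ := q
    simp only [pi1_apply, W4, W3, W2]
    split_ifs with h
    · ring
    · rfl
  rw [tsum_congr hpt]
  exact G4 h2 h3 h4 h1

lemma Tch2 (h1 : 2 ≤ l1) (h2 : 2 ≤ l2) (h3 : 2 ≤ l3) (h4 : 2 ≤ l4) :
    ∑' q : ℕ × ℕ × ℕ × ℕ, (if q.2.2.1 < q.2.1 ∧ q.2.2.2 < q.2.2.1 ∧ q.1 < q.2.2.2 then W4 l1 l2 l3 l4 q else 0)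
      = mzv ![l2, l3, l4, l1] := by
  rw [← pi1.tsum_eq (fun q : ℕ × ℕ × ℕ × ℕ => if q.2.2.1 < q.2.1 ∧ q.2.2.2 < q.2.2.1 ∧ q.1 < q.2.2.2 then W4 l1 l2 l3 l4 q else 0)]
  have hpt : ∀ q : ℕ × ℕ × ℕ × ℕ,
      (fun q : ℕ × ℕ × ℕ × ℕ => if q.2.2.1 < q.2.1 ∧ q.2.2.2 < q.2.2.1 ∧ q.1 < q.2.2.2 then W4 l1 l2 l3 l4 q else 0) (pi1 q)
        = (if q.2.1 < q.1 ∧ q.2.2.1 < q.2.1 ∧ q.2.2.2 < q.2.2.1 then W4 l2 l3 l4 l1 q else 0) := by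
    intro q
    obtain ⟨a, b, c, d⟩ := q
    simp only [pi1_apply, W4, W3, W2]
    split_ifs with h
    · ring
    · rfl
  rw [tsum_congr hpt]
  exact G1 l2 l3 l4 l1

lemma Tdc1 (h1 : 2 ≤ l1) (h2 : 2 ≤ l2) (h3 : 2 ≤ l3) (h4 : 2 ≤ l4) :
    ∑' q : ℕ × ℕ × ℕ × ℕ, (if q.2.2.2 < q.2.2.1 then W4 l1 l2 l3 l4 q else 0)
      = mzv ![l3, l4] * mzv ![l1] * mzv ![l2] := by
  rw [← pi2.tsum_eq (fun q : ℕ × ℕ × ℕ × ℕ => if q.2.2.2 < q.2.2.1 then W4 l1 l2 l3 l4 q else 0)]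
  have hpt : ∀ q : ℕ × ℕ × ℕ × ℕ,
      (fun q : ℕ × ℕ × ℕ × ℕ => if q.2.2.2 < q.2.2.1 then W4 l1 l2 l3 l4 q else 0) (pi2 q)
        = (if q.2.1 < q.1 then W4 l3 l4 l1 l2 q else 0) := by
    intro q
    obtain ⟨a, b, c, d⟩ := q
    simp only [pi2_apply, W4, W3, W2]
    split_ifs with h
    · ring
    · rfl
  rw [tsum_congr hpt]
  exact G3 h3 h4 h1 h2

lemma Tdcad (h1 : 2 ≤ l1) (h2 : 2 ≤ l2) (h3 : 2 ≤ l3) (h4 : 2 ≤ l4) :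
    ∑' q : ℕ × ℕ × ℕ × ℕ, (if q.2.2.2 < q.2.2.1 ∧ q.1 < q.2.2.2 then W4 l1 l2 l3 l4 q else 0)
      = mzv ![l3, l4, l1] * mzv ![l2] := by
  rw [← pi2.tsum_eq (fun q : ℕ × ℕ × ℕ × ℕ => if q.2.2.2 < q.2.2.1 ∧ q.1 < q.2.2.2 then W4 l1 l2 l3 l4 q else 0)]
  have hpt : ∀ q : ℕ × ℕ × ℕ × ℕ,
      (fun q : ℕ × ℕ × ℕ × ℕ => if q.2.2.2 < q.2.2.1 ∧ q.1 < q.2.2.2 then W4 l1 l2 l3 l4 q else 0) (pi2 q)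
        = (if q.2.1 < q.1 ∧ q.2.2.1 < q.2.1 then W4 l3 l4 l1 l2 q else 0) := by
    intro q
    obtain ⟨a, b, c, d⟩ := q
    simp only [pi2_apply, W4, W3, W2]
    split_ifs with h
    · ring
    · rfl
  rw [tsum_congr hpt]
  exact G4 h3 h4 h1 h2

lemma Tch3 (h1 : 2 ≤ l1) (h2 : 2 ≤ l2) (h3 : 2 ≤ l3) (h4 : 2 ≤ l4) :
    ∑' q : ℕ × ℕ × ℕ × ℕ, (if q.2.2.2 < q.2.2.1 ∧ q.1 < q.2.2.2 ∧ q.2.1 < q.1 then W4 l1 l2 l3 l4 q else 0)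
      = mzv ![l3, l4, l1, l2] := by
  rw [← pi2.tsum_eq (fun q : ℕ × ℕ × ℕ × ℕ => if q.2.2.2 < q.2.2.1 ∧ q.1 < q.2.2.2 ∧ q.2.1 < q.1 then W4 l1 l2 l3 l4 q else 0)]
  have hpt : ∀ q : ℕ × ℕ × ℕ × ℕ,
      (fun q : ℕ × ℕ × ℕ × ℕ => if q.2.2.2 < q.2.2.1 ∧ q.1 < q.2.2.2 ∧ q.2.1 < q.1 then W4 l1 l2 l3 l4 q else 0) (pi2 q)
        = (if q.2.1 < q.1 ∧ q.2.2.1 < q.2.1 ∧ q.2.2.2 < q.2.2.1 then W4 l3 l4 l1 l2 q else 0) := by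
    intro q
    obtain ⟨a, b, c, d⟩ := q
    simp only [pi2_apply, W4, W3, W2]
    split_ifs with h
    · ring
    · rfl
  rw [tsum_congr hpt]
  exact G1 l3 l4 l1 l2

lemma Tad1 (h1 : 2 ≤ l1) (h2 : 2 ≤ l2) (h3 : 2 ≤ l3) (h4 : 2 ≤ l4) :
    ∑' q : ℕ × ℕ × ℕ × ℕ, (if q.1 < q.2.2.2 then W4 l1 l2 l3 l4 q else 0)
      = mzv ![l4, l1] * mzv ![l2] * mzv ![l3] := by
  rw [← pi3.tsum_eq (fun q : ℕ × ℕ × ℕ × ℕ => if q.1 < q.2.2.2 then W4 l1 l2 l3 l4 q else 0)]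
  have hpt : ∀ q : ℕ × ℕ × ℕ × ℕ,
      (fun q : ℕ × ℕ × ℕ × ℕ => if q.1 < q.2.2.2 then W4 l1 l2 l3 l4 q else 0) (pi3 q)
        = (if q.2.1 < q.1 then W4 l4 l1 l2 l3 q else 0) := by
    intro q
    obtain ⟨a, b, c, d⟩ := q
    simp only [pi3_apply, W4, W3, W2]
    split_ifs with h
    · ring
    · rfl
  rw [tsum_congr hpt]
  exact G3 h4 h1 h2 h3

lemma Tadba (h1 : 2 ≤ l1) (h2 : 2 ≤ l2) (h3 : 2 ≤ l3) (h4 : 2 ≤ l4) :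
    ∑' q : ℕ × ℕ × ℕ × ℕ, (if q.1 < q.2.2.2 ∧ q.2.1 < q.1 then W4 l1 l2 l3 l4 q else 0)
      = mzv ![l4, l1, l2] * mzv ![l3] := by
  rw [← pi3.tsum_eq (fun q : ℕ × ℕ × ℕ × ℕ => if q.1 < q.2.2.2 ∧ q.2.1 < q.1 then W4 l1 l2 l3 l4 q else 0)]
  have hpt : ∀ q : ℕ × ℕ × ℕ × ℕ,
      (fun q : ℕ × ℕ × ℕ × ℕ => if q.1 < q.2.2.2 ∧ q.2.1 < q.1 then W4 l1 l2 l3 l4 q else 0) (pi3 q)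
        = (if q.2.1 < q.1 ∧ q.2.2.1 < q.2.1 then W4 l4 l1 l2 l3 q else 0) := by
    intro q
    obtain ⟨a, b, c, d⟩ := q
    simp only [pi3_apply, W4, W3, W2]
    split_ifs with h
    · ring
    · rfl
  rw [tsum_congr hpt]
  exact G4 h4 h1 h2 h3

lemma Tch4 (h1 : 2 ≤ l1) (h2 : 2 ≤ l2) (h3 : 2 ≤ l3) (h4 : 2 ≤ l4) :
    ∑' q : ℕ × ℕ × ℕ × ℕ, (if q.1 < q.2.2.2 ∧ q.2.1 < q.1 ∧ q.2.2.1 < q.2.1 then W4 l1 l2 l3 l4 q else 0)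
      = mzv ![l4, l1, l2, l3] := by
  rw [← pi3.tsum_eq (fun q : ℕ × ℕ × ℕ × ℕ => if q.1 < q.2.2.2 ∧ q.2.1 < q.1 ∧ q.2.2.1 < q.2.1 then W4 l1 l2 l3 l4 q else 0)]
  have hpt : ∀ q : ℕ × ℕ × ℕ × ℕ,
      (fun q : ℕ × ℕ × ℕ × ℕ => if q.1 < q.2.2.2 ∧ q.2.1 < q.1 ∧ q.2.2.1 < q.2.1 then W4 l1 l2 l3 l4 q else 0) (pi3 q)
        = (if q.2.1 < q.1 ∧ q.2.2.1 < q.2.1 ∧ q.2.2.2 < q.2.2.1 then W4 l4 l1 l2 l3 q else 0) := by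
    intro q
    obtain ⟨a, b, c, d⟩ := q
    simp only [pi3_apply, W4, W3, W2]
    split_ifs with h
    · ring
    · rfl
  rw [tsum_congr hpt]
  exact G1 l4 l1 l2 l3

lemma key (a b c d : ℕ) (w : ℝ) :
    ((if b<a ∧ c<b ∧ d<c then w else 0) + (if c<b ∧ d<c ∧ a<d then w else 0)
      + (if d<c ∧ a<d ∧ b<a then w else 0) + (if a<d ∧ b<a ∧ c<b then w else 0))
    + ((if b<a then w else 0) + (if c<b then w else 0) + (if d<c then w else 0)
      + (if a<d then w else 0))
    + (if a=b ∧ b=c ∧ c=d then w else 0)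
    = w + ((if b<a ∧ d<c then w else 0) + (if c<b ∧ a<d then w else 0)
      + (if b<a ∧ c<b then w else 0) + (if c<b ∧ d<c then w else 0)
      + (if d<c ∧ a<d then w else 0) + (if a<d ∧ b<a then w else 0)) := by
  by_cases h1 : b<a <;> by_cases h2 : c<b <;> by_cases h3 : d<c <;> by_cases h4 : a<d <;>
    first
      | (exfalso; omega)
      | (have hd : a=b ∧ b=c ∧ c=d := by omega
         simp only [h1,h2,h3,h4,hd, and_self, and_true, true_and, and_false, false_and,
           lt_self_iff_false, if_true, if_false]
         ring)
      | (have hd : ¬(a=b ∧ b=c ∧ c=d) := by omega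
         simp only [h1,h2,h3,h4,hd, if_pos, if_neg, and_self, and_true, true_and,
           and_false, false_and, not_false_eq_true, if_true, if_false, lt_self_iff_false]
         ring)

theorem cyclic_sum_depth_four (l1 l2 l3 l4 : ℕ)
    (h1 : 2 ≤ l1) (h2 : 2 ≤ l2) (h3 : 2 ≤ l3) (h4 : 2 ≤ l4) :
    mzv ![l1, l2, l3, l4] + mzv ![l2, l3, l4, l1] + mzv ![l3, l4, l1, l2]
        + mzv ![l4, l1, l2, l3] =
      mzv ![l1] * mzv ![l2] * mzv ![l3] * mzv ![l4]
        - (mzv ![l1, l2] * mzv ![l3] * mzv ![l4]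
            + mzv ![l2, l3] * mzv ![l4] * mzv ![l1]
            + mzv ![l3, l4] * mzv ![l1] * mzv ![l2]
            + mzv ![l4, l1] * mzv ![l2] * mzv ![l3])
        + mzv ![l1, l2] * mzv ![l3, l4] + mzv ![l2, l3] * mzv ![l4, l1]
        + mzv ![l1, l2, l3] * mzv ![l4] + mzv ![l2, l3, l4] * mzv ![l1]
        + mzv ![l3, l4, l1] * mzv ![l2] + mzv ![l4, l1, l2] * mzv ![l3]
        - mzv ![l1 + l2 + l3 + l4] := by
  have sW : Summable (W4 l1 l2 l3 l4) := W4_summable h1 h2 h3 h4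
  have hW0 := W4_nonneg l1 l2 l3 l4
  have sF1 : Summable (fun q : ℕ × ℕ × ℕ × ℕ => (if q.2.1 < q.1 ∧ q.2.2.1 < q.2.1 ∧ q.2.2.2 < q.2.2.1 then W4 l1 l2 l3 l4 q else 0)) :=
    summable_ite sW hW0 _
  have sF2 : Summable (fun q : ℕ × ℕ × ℕ × ℕ => (if q.2.2.1 < q.2.1 ∧ q.2.2.2 < q.2.2.1 ∧ q.1 < q.2.2.2 then W4 l1 l2 l3 l4 q else 0)) :=
    summable_ite sW hW0 _
  have sF3 : Summable (fun q : ℕ × ℕ × ℕ × ℕ => (if q.2.2.2 < q.2.2.1 ∧ q.1 < q.2.2.2 ∧ q.2.1 < q.1 then W4 l1 l2 l3 l4 q else 0)) :=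
    summable_ite sW hW0 _
  have sF4 : Summable (fun q : ℕ × ℕ × ℕ × ℕ => (if q.1 < q.2.2.2 ∧ q.2.1 < q.1 ∧ q.2.2.1 < q.2.1 then W4 l1 l2 l3 l4 q else 0)) :=
    summable_ite sW hW0 _
  have sF5 : Summable (fun q : ℕ × ℕ × ℕ × ℕ => (if q.2.1 < q.1 then W4 l1 l2 l3 l4 q else 0)) :=
    summable_ite sW hW0 _
  have sF6 : Summable (fun q : ℕ × ℕ × ℕ × ℕ => (if q.2.2.1 < q.2.1 then W4 l1 l2 l3 l4 q else 0)) :=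
    summable_ite sW hW0 _
  have sF7 : Summable (fun q : ℕ × ℕ × ℕ × ℕ => (if q.2.2.2 < q.2.2.1 then W4 l1 l2 l3 l4 q else 0)) :=
    summable_ite sW hW0 _
  have sF8 : Summable (fun q : ℕ × ℕ × ℕ × ℕ => (if q.1 < q.2.2.2 then W4 l1 l2 l3 l4 q else 0)) :=
    summable_ite sW hW0 _
  have sF9 : Summable (fun q : ℕ × ℕ × ℕ × ℕ => (if q.1 = q.2.1 ∧ q.2.1 = q.2.2.1 ∧ q.2.2.1 = q.2.2.2 then W4 l1 l2 l3 l4 q else 0)) :=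
    summable_ite sW hW0 _
  have sP1 : Summable (fun q : ℕ × ℕ × ℕ × ℕ => (if q.2.1 < q.1 ∧ q.2.2.2 < q.2.2.1 then W4 l1 l2 l3 l4 q else 0)) :=
    summable_ite sW hW0 _
  have sP2 : Summable (fun q : ℕ × ℕ × ℕ × ℕ => (if q.2.2.1 < q.2.1 ∧ q.1 < q.2.2.2 then W4 l1 l2 l3 l4 q else 0)) :=
    summable_ite sW hW0 _
  have sP3 : Summable (fun q : ℕ × ℕ × ℕ × ℕ => (if q.2.1 < q.1 ∧ q.2.2.1 < q.2.1 then W4 l1 l2 l3 l4 q else 0)) :=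
    summable_ite sW hW0 _
  have sP4 : Summable (fun q : ℕ × ℕ × ℕ × ℕ => (if q.2.2.1 < q.2.1 ∧ q.2.2.2 < q.2.2.1 then W4 l1 l2 l3 l4 q else 0)) :=
    summable_ite sW hW0 _
  have sP5 : Summable (fun q : ℕ × ℕ × ℕ × ℕ => (if q.2.2.2 < q.2.2.1 ∧ q.1 < q.2.2.2 then W4 l1 l2 l3 l4 q else 0)) :=
    summable_ite sW hW0 _
  have sP6 : Summable (fun q : ℕ × ℕ × ℕ × ℕ => (if q.1 < q.2.2.2 ∧ q.2.1 < q.1 then W4 l1 l2 l3 l4 q else 0)) :=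
    summable_ite sW hW0 _
  have key9 : ∀ q : ℕ × ℕ × ℕ × ℕ,
      ((if q.2.1 < q.1 ∧ q.2.2.1 < q.2.1 ∧ q.2.2.2 < q.2.2.1 then W4 l1 l2 l3 l4 q else 0) + (if q.2.2.1 < q.2.1 ∧ q.2.2.2 < q.2.2.1 ∧ q.1 < q.2.2.2 then W4 l1 l2 l3 l4 q else 0)
      + (if q.2.2.2 < q.2.2.1 ∧ q.1 < q.2.2.2 ∧ q.2.1 < q.1 then W4 l1 l2 l3 l4 q else 0) + (if q.1 < q.2.2.2 ∧ q.2.1 < q.1 ∧ q.2.2.1 < q.2.1 then W4 l1 l2 l3 l4 q else 0))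
    + ((if q.2.1 < q.1 then W4 l1 l2 l3 l4 q else 0) + (if q.2.2.1 < q.2.1 then W4 l1 l2 l3 l4 q else 0) + (if q.2.2.2 < q.2.2.1 then W4 l1 l2 l3 l4 q else 0)
      + (if q.1 < q.2.2.2 then W4 l1 l2 l3 l4 q else 0))
    + (if q.1 = q.2.1 ∧ q.2.1 = q.2.2.1 ∧ q.2.2.1 = q.2.2.2 then W4 l1 l2 l3 l4 q else 0)
      = W4 l1 l2 l3 l4 q + ((if q.2.1 < q.1 ∧ q.2.2.2 < q.2.2.1 then W4 l1 l2 l3 l4 q else 0) + (if q.2.2.1 < q.2.1 ∧ q.1 < q.2.2.2 then W4 l1 l2 l3 l4 q else 0)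
      + (if q.2.1 < q.1 ∧ q.2.2.1 < q.2.1 then W4 l1 l2 l3 l4 q else 0) + (if q.2.2.1 < q.2.1 ∧ q.2.2.2 < q.2.2.1 then W4 l1 l2 l3 l4 q else 0)
      + (if q.2.2.2 < q.2.2.1 ∧ q.1 < q.2.2.2 then W4 l1 l2 l3 l4 q else 0) + (if q.1 < q.2.2.2 ∧ q.2.1 < q.1 then W4 l1 l2 l3 l4 q else 0)) := fun q => key q.1 q.2.1 q.2.2.1 q.2.2.2 (W4 l1 l2 l3 l4 q)
  have E := tsum_congr (L := SummationFilter.unconditional _) key9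
  rw [Summable.tsum_add ((((sF1.add sF2).add sF3).add sF4).add (((sF5.add sF6).add sF7).add sF8)) sF9,
      Summable.tsum_add (((sF1.add sF2).add sF3).add sF4) (((sF5.add sF6).add sF7).add sF8),
      Summable.tsum_add ((sF1.add sF2).add sF3) sF4,
      Summable.tsum_add (sF1.add sF2) sF3,
      Summable.tsum_add sF1 sF2,
      Summable.tsum_add ((sF5.add sF6).add sF7) sF8,
      Summable.tsum_add (sF5.add sF6) sF7,
      Summable.tsum_add sF5 sF6,
      Summable.tsum_add sW (((((sP1.add sP2).add sP3).add sP4).add sP5).add sP6),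
      Summable.tsum_add ((((sP1.add sP2).add sP3).add sP4).add sP5) sP6,
      Summable.tsum_add (((sP1.add sP2).add sP3).add sP4) sP5,
      Summable.tsum_add ((sP1.add sP2).add sP3) sP4,
      Summable.tsum_add (sP1.add sP2) sP3,
      Summable.tsum_add sP1 sP2] at E
  rw [G1 l1 l2 l3 l4, Tch2 h1 h2 h3 h4, Tch3 h1 h2 h3 h4, Tch4 h1 h2 h3 h4,
      G3 h1 h2 h3 h4, Tcb1 h1 h2 h3 h4, Tdc1 h1 h2 h3 h4, Tad1 h1 h2 h3 h4,
      G6, G5 h1 h2 h3 h4,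
      G2 h1 h2 h3 h4, Tcbad h1 h2 h3 h4, G4 h1 h2 h3 h4, Tcbdc h1 h2 h3 h4,
      Tdcad h1 h2 h3 h4, Tadba h1 h2 h3 h4] at E
  linarith [E]
end

section
/- Let l1, l3, l4 be integers, each at least 2, and let l2 be a positive integer. Then ζ(l1,l2)·ζ(l3)·ζ(l4) = ζ(l1,l2)·ζ(l3,l4) + ζ(l1,l2)·ζ(l4,l3) + ζ(l3+l4,l1,l2) + ζ(l1,l3+l4,l2) + ζ(l1,l2,l3+l4) + ζ(l1+l3+l4,l2) + ζ(l1,l2+l3+l4). (Third identity of Proposition 3 (harmonic relations in depth 4) of the paper, restricted to convergent indices.) -/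
open scoped ENNReal

noncomputable def w (k m : ℕ) : ℝ≥0∞ := if 1 ≤ m then ((m : ℝ≥0∞) ^ k)⁻¹ else 0

open Classical in
noncomputable def Z {n : ℕ} (l : Fin n → ℕ) : ℝ≥0∞ :=
  ∑' m : Fin n → ℕ,
    if StrictAnti m ∧ ∀ i, 1 ≤ m i then ∏ i, ((m i : ℝ≥0∞) ^ (l i))⁻¹ else 0

lemma w_ne_top (k m : ℕ) : w k m ≠ ⊤ := by
  unfold w; split
  · simp only [ne_eq, ENNReal.inv_eq_top, pow_eq_zero_iff', Nat.cast_eq_zero]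
    omega
  · simp

lemma w_mul_w (k l m : ℕ) : w k m * w l m = w (k + l) m := by
  unfold w; split
  · rw [pow_add, ENNReal.mul_inv (Or.inl (by positivity)) (Or.inl (ENNReal.pow_ne_top (ENNReal.natCast_ne_top m)))]
  · simp

open Classical in
lemma mzv_eq_toReal {n : ℕ} (l : Fin n → ℕ) : mzv l = (Z l).toReal := by
  rw [mzv, Z, ENNReal.tsum_toReal_eq]
  · apply tsum_congr; intro m
    by_cases h : StrictAnti m ∧ ∀ i, 1 ≤ m i
    · rw [if_pos h, if_pos h, ENNReal.toReal_prod]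
      apply Finset.prod_congr rfl; intro i _
      simp [ENNReal.toReal_inv, ENNReal.toReal_pow, one_div]
    · rw [if_neg h, if_neg h, ENNReal.toReal_zero]
  · intro m
    by_cases h : StrictAnti m ∧ ∀ i, 1 ≤ m i
    · rw [if_pos h]
      exact ENNReal.prod_ne_top fun i _ => by
        simp only [ne_eq, ENNReal.inv_eq_top, pow_eq_zero_iff', Nat.cast_eq_zero]
        have := h.2 i; omega
    · simp [h]

noncomputable def Z1 (k : ℕ) : ℝ≥0∞ := ∑' m : ℕ, w k m

open Classical in
noncomputable def Z2 (a b : ℕ) : ℝ≥0∞ :=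
  ∑' p : ℕ × ℕ, if p.2 < p.1 then w a p.1 * w b p.2 else 0

open Classical in
noncomputable def Z3 (a b c : ℕ) : ℝ≥0∞ :=
  ∑' q : ℕ × ℕ × ℕ,
    if q.2.1 < q.1 ∧ q.2.2 < q.2.1 then w a q.1 * w b q.2.1 * w c q.2.2 else 0

lemma strictAnti_fin1 (f : Fin 1 → ℕ) : StrictAnti f := by
  intro i j hij
  rw [Fin.lt_def] at hij
  have := i.isLt; have := j.isLt; omega

lemma strictAnti_fin2 {f : Fin 2 → ℕ} : StrictAnti f ↔ f 1 < f 0 := by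
  constructor
  · intro h; exact h (by decide : (0 : Fin 2) < 1)
  · intro h i j hij
    fin_cases i <;> fin_cases j <;> simp_all [Fin.lt_def] <;> omega

lemma strictAnti_fin3 {f : Fin 3 → ℕ} : StrictAnti f ↔ f 1 < f 0 ∧ f 2 < f 1 := by
  constructor
  · intro h
    exact ⟨h (by decide : (0 : Fin 3) < 1), h (by decide : (1 : Fin 3) < 2)⟩
  · rintro ⟨h01, h12⟩ i j hij
    have h02 : f 2 < f 0 := h12.trans h01
    fin_cases i <;> fin_cases j <;> simp_all [Fin.lt_def] <;> omega

def e3f : (Fin 3 → ℕ) ≃ ℕ × ℕ × ℕ where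
  toFun m := (m 0, m 1, m 2)
  invFun q := ![q.1, q.2.1, q.2.2]
  left_inv m := by funext i; fin_cases i <;> rfl
  right_inv q := rfl

lemma Z_one (k : ℕ) : Z ![k] = Z1 k := by
  rw [Z, Z1, ← Equiv.tsum_eq (Equiv.funUnique (Fin 1) ℕ).symm]
  apply tsum_congr; intro n
  simp only [Equiv.funUnique_symm_apply, Function.const]
  rw [Fin.prod_univ_one]
  by_cases h : 1 ≤ n
  · rw [if_pos ⟨strictAnti_fin1 _, fun _ => h⟩, w, if_pos h]
    rfl
  · rw [if_neg (by rintro ⟨-, hall⟩; exact h (hall 0)), w, if_neg h]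

lemma Z_two (a b : ℕ) : Z ![a, b] = Z2 a b := by
  rw [Z, Z2, ← Equiv.tsum_eq (piFinTwoEquiv fun _ => ℕ).symm]
  apply tsum_congr; intro p
  simp only [piFinTwoEquiv_symm_apply, Fin.cons_zero, Fin.cons_one]
  rw [Fin.prod_univ_two]
  by_cases h0 : p.2 < p.1 ∧ 1 ≤ p.2
  · rw [if_pos ⟨strictAnti_fin2.2 (by simpa using h0.1), fun i => by
      fin_cases i <;> simp <;> omega⟩, if_pos h0.1]
    simp [w, h0.2, Nat.one_le_iff_ne_zero.2 (by omega : p.1 ≠ 0)]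
  · by_cases h1 : p.2 < p.1
    · have hp2 : ¬ 1 ≤ p.2 := by tauto
      rw [if_neg (by rintro ⟨-, h⟩; exact hp2 (h 1)), if_pos h1]
      simp [w, hp2]
    · rw [if_neg (by rintro ⟨hs, -⟩; exact h1 (by simpa using strictAnti_fin2.1 hs)), if_neg h1]

lemma Z_three (a b c : ℕ) : Z ![a, b, c] = Z3 a b c := by
  rw [Z, Z3, ← Equiv.tsum_eq e3f.symm]
  apply tsum_congr; intro q
  have e0 : e3f.symm q 0 = q.1 := rfl
  have e1 : e3f.symm q 1 = q.2.1 := rfl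
  have e2 : e3f.symm q 2 = q.2.2 := rfl
  rw [Fin.prod_univ_three, e0, e1, e2]
  by_cases h0 : (q.2.1 < q.1 ∧ q.2.2 < q.2.1) ∧ 1 ≤ q.2.2
  · rw [if_pos ⟨strictAnti_fin3.2 (by rw [e0, e1, e2]; exact h0.1), fun i => by
      fin_cases i <;> simp [e0, e1, e2] <;> omega⟩, if_pos h0.1]
    simp [w, h0.2, Nat.one_le_iff_ne_zero.2 (by omega : q.1 ≠ 0),
      Nat.one_le_iff_ne_zero.2 (by omega : q.2.1 ≠ 0)]
  · by_cases h1 : q.2.1 < q.1 ∧ q.2.2 < q.2.1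
    · have hp2 : ¬ 1 ≤ q.2.2 := by tauto
      rw [if_neg (by rintro ⟨-, h⟩; exact hp2 (by simpa [e2] using h 2)), if_pos h1]
      simp [w, hp2]
    · rw [if_neg (by rintro ⟨hs, -⟩; exact h1 (by
        have := strictAnti_fin3.1 hs; rw [e0, e1, e2] at this; exact this)), if_neg h1]

open Classical in
lemma stuffle11 (k l : ℕ) : Z1 k * Z1 l = Z2 k l + Z2 l k + Z1 (k + l) := by
  have h : Z1 k * Z1 l = ∑' p : ℕ × ℕ, w k p.1 * w l p.2 := by
    rw [Z1, Z1, ← ENNReal.tsum_mul_right,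
      ENNReal.tsum_prod (f := fun m n => w k m * w l n)]
    exact tsum_congr fun m => ENNReal.tsum_mul_left.symm
  have hsplit : ∀ p : ℕ × ℕ, w k p.1 * w l p.2 =
      (if p.2 < p.1 then w k p.1 * w l p.2 else 0)
        + (if p.1 < p.2 then w k p.1 * w l p.2 else 0)
        + (if p.1 = p.2 then w k p.1 * w l p.2 else 0) := by
    intro p
    by_cases h1 : p.2 < p.1
    · rw [if_pos h1, if_neg (by omega), if_neg (by omega), add_zero, add_zero]
    · by_cases h2 : p.1 < p.2
      · rw [if_neg h1, if_pos h2, if_neg (by omega), zero_add, add_zero]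
      · rw [if_neg h1, if_neg h2, if_pos (by omega), zero_add, zero_add]
  have hA : ∑' p : ℕ × ℕ, (if p.2 < p.1 then w k p.1 * w l p.2 else 0) = Z2 k l := by
    rw [Z2]
  have hB : ∑' p : ℕ × ℕ, (if p.1 < p.2 then w k p.1 * w l p.2 else 0) = Z2 l k := by
    rw [Z2, ← Equiv.tsum_eq (Equiv.prodComm ℕ ℕ)]
    exact tsum_congr fun p => by
      by_cases h' : p.1 < p.2 <;> simp [h', mul_comm] <;> exact if_congr Iff.rfl rfl rfl
  have hC : ∑' p : ℕ × ℕ, (if p.1 = p.2 then w k p.1 * w l p.2 else 0) = Z1 (k + l) := by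
    rw [Z1, ENNReal.tsum_prod (f := fun m n => if m = n then w k m * w l n else 0)]
    apply tsum_congr; intro m
    rw [tsum_eq_single m (fun n hn => by simp [Ne.symm hn]), if_pos rfl, w_mul_w]
  rw [h, tsum_congr hsplit, ENNReal.tsum_add, ENNReal.tsum_add, hA, hB, hC]

def eMid : (ℕ × ℕ) × ℕ ≃ ℕ × ℕ × ℕ where
  toFun x := (x.1.1, x.2, x.1.2)
  invFun q := ((q.1, q.2.2), q.2.1)
  left_inv x := rfl
  right_inv q := rfl

open Classical in
lemma stuffle21 (a b c : ℕ) : Z2 a b * Z1 c =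
    Z3 c a b + Z3 a c b + Z3 a b c + Z2 (a + c) b + Z2 a (b + c) := by
  have h : Z2 a b * Z1 c = ∑' x : (ℕ × ℕ) × ℕ,
      (if x.1.2 < x.1.1 then w a x.1.1 * w b x.1.2 else 0) * w c x.2 := by
    rw [Z2, Z1, ← ENNReal.tsum_mul_right,
      ENNReal.tsum_prod (f := fun (p : ℕ × ℕ) (r : ℕ) => (if p.2 < p.1 then w a p.1 * w b p.2 else 0) * w c r)]
    exact tsum_congr fun p => ENNReal.tsum_mul_left.symm
  have hsplit : ∀ x : (ℕ × ℕ) × ℕ,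
      (if x.1.2 < x.1.1 then w a x.1.1 * w b x.1.2 else 0) * w c x.2 =
      (if x.1.2 < x.1.1 ∧ x.1.1 < x.2 then w a x.1.1 * w b x.1.2 * w c x.2 else 0)
        + (if x.1.2 < x.1.1 ∧ x.2 = x.1.1 then w a x.1.1 * w b x.1.2 * w c x.2 else 0)
        + (if x.2 < x.1.1 ∧ x.1.2 < x.2 then w a x.1.1 * w b x.1.2 * w c x.2 else 0)
        + (if x.1.2 < x.1.1 ∧ x.2 = x.1.2 then w a x.1.1 * w b x.1.2 * w c x.2 else 0)
        + (if x.1.2 < x.1.1 ∧ x.2 < x.1.2 then w a x.1.1 * w b x.1.2 * w c x.2 else 0) := by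
    rintro ⟨⟨m, n⟩, r⟩
    simp only
    by_cases h0 : n < m
    · rw [if_pos h0]
      rcases lt_trichotomy r m with hr | hr | hr
      · rcases lt_trichotomy r n with hs | hs | hs
        · rw [if_neg (by omega), if_neg (by omega), if_neg (by omega), if_neg (by omega),
            if_pos ⟨h0, hs⟩]
          simp
        · rw [if_neg (by omega), if_neg (by omega), if_neg (by omega), if_pos ⟨h0, hs⟩,
            if_neg (by omega)]
          simp
        · rw [if_neg (by omega), if_neg (by omega), if_pos ⟨hr, hs⟩, if_neg (by omega),
            if_neg (by omega)]
          simp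
      · rw [if_neg (by omega), if_pos ⟨h0, hr⟩, if_neg (by omega), if_neg (by omega),
          if_neg (by omega)]
        simp
      · rw [if_pos ⟨h0, hr⟩, if_neg (by omega), if_neg (by omega), if_neg (by omega),
          if_neg (by omega)]
        simp
    · rw [if_neg h0, if_neg (by omega), if_neg (by omega), if_neg (by omega),
        if_neg (by omega), if_neg (by omega)]
      simp
  have hP1 : ∑' x : (ℕ × ℕ) × ℕ,
      (if x.1.2 < x.1.1 ∧ x.1.1 < x.2 then w a x.1.1 * w b x.1.2 * w c x.2 else 0)
      = Z3 c a b := by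
    rw [Z3, ← Equiv.tsum_eq (Equiv.prodComm (ℕ × ℕ) ℕ)]
    apply tsum_congr; rintro ⟨⟨m, n⟩, r⟩
    by_cases h' : n < m ∧ m < r
    · rw [if_pos h', show (Equiv.prodComm (ℕ × ℕ) ℕ) ((m, n), r) = (r, (m, n)) from rfl,
        if_pos ⟨h'.2, h'.1⟩]
      ring
    · rw [if_neg h', show (Equiv.prodComm (ℕ × ℕ) ℕ) ((m, n), r) = (r, (m, n)) from rfl,
        if_neg (by dsimp only; omega)]
  have hP2 : ∑' x : (ℕ × ℕ) × ℕ,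
      (if x.1.2 < x.1.1 ∧ x.2 = x.1.1 then w a x.1.1 * w b x.1.2 * w c x.2 else 0)
      = Z2 (a + c) b := by
    rw [Z2, ENNReal.tsum_prod (f := fun (p : ℕ × ℕ) (r : ℕ) =>
      if p.2 < p.1 ∧ r = p.1 then w a p.1 * w b p.2 * w c r else 0)]
    apply tsum_congr; rintro ⟨m, n⟩
    rw [tsum_eq_single m (fun r hr => by simp [hr]), ]
    by_cases h' : n < m
    · rw [if_pos ⟨h', rfl⟩, if_pos h']
      rw [show w a m * w b n * w c m = w a m * w c m * w b n by ring, w_mul_w]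
    · rw [if_neg (by tauto), if_neg h']
  have hP3 : ∑' x : (ℕ × ℕ) × ℕ,
      (if x.2 < x.1.1 ∧ x.1.2 < x.2 then w a x.1.1 * w b x.1.2 * w c x.2 else 0)
      = Z3 a c b := by
    rw [Z3, ← Equiv.tsum_eq eMid]
    apply tsum_congr; rintro ⟨⟨m, n⟩, r⟩
    by_cases h' : r < m ∧ n < r
    · rw [if_pos h', show eMid ((m, n), r) = (m, r, n) from rfl, if_pos h']
      ring
    · rw [if_neg h', show eMid ((m, n), r) = (m, r, n) from rfl, if_neg h']
  have hP4 : ∑' x : (ℕ × ℕ) × ℕ,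
      (if x.1.2 < x.1.1 ∧ x.2 = x.1.2 then w a x.1.1 * w b x.1.2 * w c x.2 else 0)
      = Z2 a (b + c) := by
    rw [Z2, ENNReal.tsum_prod (f := fun (p : ℕ × ℕ) (r : ℕ) =>
      if p.2 < p.1 ∧ r = p.2 then w a p.1 * w b p.2 * w c r else 0)]
    apply tsum_congr; rintro ⟨m, n⟩
    rw [tsum_eq_single n (fun r hr => by simp [hr])]
    by_cases h' : n < m
    · rw [if_pos ⟨h', rfl⟩, if_pos h', mul_assoc, w_mul_w]
    · rw [if_neg (by tauto), if_neg h']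
  have hP5 : ∑' x : (ℕ × ℕ) × ℕ,
      (if x.1.2 < x.1.1 ∧ x.2 < x.1.2 then w a x.1.1 * w b x.1.2 * w c x.2 else 0)
      = Z3 a b c := by
    rw [Z3, ← Equiv.tsum_eq (Equiv.prodAssoc ℕ ℕ ℕ)]
    apply tsum_congr; rintro ⟨⟨m, n⟩, r⟩
    rfl
  rw [h, tsum_congr hsplit, ENNReal.tsum_add, ENNReal.tsum_add, ENNReal.tsum_add,
    ENNReal.tsum_add, hP1, hP2, hP3, hP4, hP5]
  ring

lemma w_eq_ofReal (k m : ℕ) :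
    w k m = ENNReal.ofReal (if 1 ≤ m then 1 / (m : ℝ) ^ k else 0) := by
  unfold w
  by_cases h : 1 ≤ m
  · have hm : (0 : ℝ) < (m : ℝ) := by exact_mod_cast h
    rw [if_pos h, if_pos h, one_div, ENNReal.ofReal_inv_of_pos (by positivity),
      ENNReal.ofReal_pow (by positivity), ENNReal.ofReal_natCast]
  · rw [if_neg h, if_neg h, ENNReal.ofReal_zero]

lemma Z1_ne_top {k : ℕ} (hk : 2 ≤ k) : Z1 k ≠ ⊤ := by
  have hs : Summable (fun m : ℕ => if 1 ≤ m then 1 / (m : ℝ) ^ k else 0) := by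
    apply (Real.summable_one_div_nat_pow.mpr (by omega : 1 < k)).congr
    intro m
    by_cases h : 1 ≤ m
    · rw [if_pos h]
    · rw [if_neg h, show m = 0 by omega]
      simp [zero_pow (by omega : k ≠ 0)]
  rw [Z1, tsum_congr (w_eq_ofReal k),
    ← ENNReal.ofReal_tsum_of_nonneg (fun n => by split <;> positivity) hs]
  exact ENNReal.ofReal_ne_top

lemma rpow_bound {a b : ℕ} (ha : 2 ≤ a) (hb : 1 ≤ b) {m n : ℕ} (hn : 1 ≤ n) (hnm : n < m) :
    1 / (m : ℝ) ^ a * (1 / (n : ℝ) ^ b) ≤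
      1 / (m : ℝ) ^ ((3 : ℝ) / 2) * (1 / (n : ℝ) ^ ((3 : ℝ) / 2)) := by
  have hy1 : (1 : ℝ) ≤ (n : ℝ) := by exact_mod_cast hn
  have hx1 : (1 : ℝ) ≤ (m : ℝ) := by
    have : 1 ≤ m := by omega
    exact_mod_cast this
  have hxy : (n : ℝ) ≤ (m : ℝ) := by exact_mod_cast hnm.le
  have hx : (0 : ℝ) < (m : ℝ) := by linarith
  have hy : (0 : ℝ) < (n : ℝ) := by linarith
  rw [div_mul_div_comm, div_mul_div_comm, one_mul]
  apply one_div_le_one_div_of_le (by positivity)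
  calc (m : ℝ) ^ ((3 : ℝ) / 2) * (n : ℝ) ^ ((3 : ℝ) / 2)
      ≤ (m : ℝ) ^ 2 * (n : ℝ) ^ 1 := by
        have h1 : (m : ℝ) ^ ((3 : ℝ) / 2) * (m : ℝ) ^ ((1 : ℝ) / 2) = (m : ℝ) ^ 2 := by
          rw [← Real.rpow_add hx]
          norm_num
        have h2 : (n : ℝ) ^ ((3 : ℝ) / 2) = (n : ℝ) * (n : ℝ) ^ ((1 : ℝ) / 2) := by
          nth_rewrite 2 [← Real.rpow_one (n : ℝ)]
          rw [← Real.rpow_add hy]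
          norm_num
        have h3 : (n : ℝ) ^ ((1 : ℝ) / 2) ≤ (m : ℝ) ^ ((1 : ℝ) / 2) :=
          Real.rpow_le_rpow hy.le hxy (by norm_num)
        have h4 : (0 : ℝ) ≤ (m : ℝ) ^ ((3 : ℝ) / 2) := Real.rpow_nonneg hx.le _
        calc (m : ℝ) ^ ((3 : ℝ) / 2) * (n : ℝ) ^ ((3 : ℝ) / 2)
            = (m : ℝ) ^ ((3 : ℝ) / 2) * (n : ℝ) * (n : ℝ) ^ ((1 : ℝ) / 2) := by
              rw [h2]; ring
          _ ≤ (m : ℝ) ^ ((3 : ℝ) / 2) * (n : ℝ) * (m : ℝ) ^ ((1 : ℝ) / 2) := by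
              apply mul_le_mul_of_nonneg_left h3 (by positivity)
          _ = (m : ℝ) ^ 2 * (n : ℝ) ^ 1 := by
              rw [pow_one]
              nlinarith [h1]
    _ ≤ (m : ℝ) ^ a * (n : ℝ) ^ b := by
        apply mul_le_mul (pow_le_pow_right₀ hx1 ha) (pow_le_pow_right₀ hy1 hb)
          (by positivity) (by positivity)

set_option maxHeartbeats 1000000 in
open Classical in
lemma Z2_ne_top {a b : ℕ} (ha : 2 ≤ a) (hb : 1 ≤ b) : Z2 a b ≠ ⊤ := by
  set V : ℕ × ℕ → ℝ := fun p =>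
    if p.2 < p.1 then
      (if 1 ≤ p.1 then 1 / (p.1 : ℝ) ^ a else 0) * (if 1 ≤ p.2 then 1 / (p.2 : ℝ) ^ b else 0)
    else 0 with hV
  have hVnn : ∀ p, 0 ≤ V p := fun p => by
    rw [hV]; dsimp only; split
    · apply mul_nonneg <;> (split <;> positivity)
    · exact le_refl 0
  have hg : Summable (fun n : ℕ => 1 / (n : ℝ) ^ ((3 : ℝ) / 2)) :=
    Real.summable_one_div_nat_rpow.mpr (by norm_num)
  have hU : Summable (fun p : ℕ × ℕ => (1 / (p.1 : ℝ) ^ ((3 : ℝ) / 2)) *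
      (1 / (p.2 : ℝ) ^ ((3 : ℝ) / 2))) :=
    hg.mul_of_nonneg hg (fun n => by positivity) (fun n => by positivity)
  have hVs : Summable V := by
    apply hU.of_nonneg_of_le hVnn
    rintro ⟨m, n⟩
    rw [hV]; dsimp only
    by_cases h0 : n < m
    · rw [if_pos h0]
      by_cases hn : 1 ≤ n
      · rw [if_pos hn, if_pos (by omega : 1 ≤ m)]
        exact rpow_bound ha hb hn h0
      · rw [if_neg hn, mul_zero]
        positivity
    · rw [if_neg h0]
      positivity
  have heq : ∀ p : ℕ × ℕ, (if p.2 < p.1 then w a p.1 * w b p.2 else 0) =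
      ENNReal.ofReal (V p) := by
    rintro ⟨m, n⟩
    rw [hV]; dsimp only
    by_cases h0 : n < m
    · rw [if_pos h0, if_pos h0, w_eq_ofReal, w_eq_ofReal,
        ← ENNReal.ofReal_mul (by split <;> positivity)]
    · rw [if_neg h0, if_neg h0, ENNReal.ofReal_zero]
  rw [Z2, tsum_congr heq, ← ENNReal.ofReal_tsum_of_nonneg hVnn hVs]
  exact ENNReal.ofReal_ne_top

theorem harmonic_relation_depth_four_third (l1 l2 l3 l4 : ℕ)
    (h1 : 2 ≤ l1) (h2 : 1 ≤ l2) (h3 : 2 ≤ l3) (h4 : 2 ≤ l4) :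
    mzv ![l1, l2] * mzv ![l3] * mzv ![l4] =
      mzv ![l1, l2] * mzv ![l3, l4] + mzv ![l1, l2] * mzv ![l4, l3]
        + mzv ![l3 + l4, l1, l2] + mzv ![l1, l3 + l4, l2] + mzv ![l1, l2, l3 + l4]
        + mzv ![l1 + l3 + l4, l2] + mzv ![l1, l2 + l3 + l4] := by
  have key : Z2 l1 l2 * Z1 l3 * Z1 l4 =
      Z2 l1 l2 * Z2 l3 l4 + Z2 l1 l2 * Z2 l4 l3 + Z3 (l3 + l4) l1 l2
        + Z3 l1 (l3 + l4) l2 + Z3 l1 l2 (l3 + l4) + Z2 (l1 + l3 + l4) l2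
        + Z2 l1 (l2 + l3 + l4) := by
    calc Z2 l1 l2 * Z1 l3 * Z1 l4 = Z2 l1 l2 * (Z1 l3 * Z1 l4) := by ring
      _ = Z2 l1 l2 * (Z2 l3 l4 + Z2 l4 l3 + Z1 (l3 + l4)) := by rw [stuffle11]
      _ = Z2 l1 l2 * Z2 l3 l4 + Z2 l1 l2 * Z2 l4 l3 + Z2 l1 l2 * Z1 (l3 + l4) := by ring
      _ = _ := by
          rw [stuffle21 l1 l2 (l3 + l4), show l1 + (l3 + l4) = l1 + l3 + l4 by omega,
            show l2 + (l3 + l4) = l2 + l3 + l4 by omega]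
          ring
  have hA : Z2 l1 l2 ≠ ⊤ := Z2_ne_top h1 h2
  have hB : Z1 l3 ≠ ⊤ := Z1_ne_top h3
  have hC : Z1 l4 ≠ ⊤ := Z1_ne_top h4
  have hLHS : Z2 l1 l2 * Z1 l3 * Z1 l4 ≠ ⊤ :=
    ENNReal.mul_ne_top (ENNReal.mul_ne_top hA hB) hC
  have hsum : Z2 l1 l2 * Z2 l3 l4 + Z2 l1 l2 * Z2 l4 l3 + Z3 (l3 + l4) l1 l2
      + Z3 l1 (l3 + l4) l2 + Z3 l1 l2 (l3 + l4) + Z2 (l1 + l3 + l4) l2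
      + Z2 l1 (l2 + l3 + l4) ≠ ⊤ := key ▸ hLHS
  have hT1 : Z2 l1 l2 * Z2 l3 l4 ≠ ⊤ := fun h => hsum (by simp [h])
  have hT2 : Z2 l1 l2 * Z2 l4 l3 ≠ ⊤ := fun h => hsum (by simp [h])
  have hT3 : Z3 (l3 + l4) l1 l2 ≠ ⊤ := fun h => hsum (by simp [h])
  have hT4 : Z3 l1 (l3 + l4) l2 ≠ ⊤ := fun h => hsum (by simp [h])
  have hT5 : Z3 l1 l2 (l3 + l4) ≠ ⊤ := fun h => hsum (by simp [h])
  have hT6 : Z2 (l1 + l3 + l4) l2 ≠ ⊤ := fun h => hsum (by simp [h])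
  have hT7 : Z2 l1 (l2 + l3 + l4) ≠ ⊤ := fun h => hsum (by simp [h])
  have hS2 : Z2 l1 l2 * Z2 l3 l4 + Z2 l1 l2 * Z2 l4 l3 ≠ ⊤ :=
    ENNReal.add_ne_top.2 ⟨hT1, hT2⟩
  have hS3 : _ ≠ ⊤ := ENNReal.add_ne_top.2 ⟨hS2, hT3⟩
  have hS4 : _ ≠ ⊤ := ENNReal.add_ne_top.2 ⟨hS3, hT4⟩
  have hS5 : _ ≠ ⊤ := ENNReal.add_ne_top.2 ⟨hS4, hT5⟩
  have hS6 : _ ≠ ⊤ := ENNReal.add_ne_top.2 ⟨hS5, hT6⟩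
  simp only [mzv_eq_toReal, Z_one, Z_two, Z_three]
  rw [← ENNReal.toReal_mul, ← ENNReal.toReal_mul, key, ← ENNReal.toReal_mul,
    ← ENNReal.toReal_mul, ENNReal.toReal_add hS6 hT7, ENNReal.toReal_add hS5 hT6,
    ENNReal.toReal_add hS4 hT5, ENNReal.toReal_add hS3 hT4, ENNReal.toReal_add hS2 hT3,
    ENNReal.toReal_add hT1 hT2]
end
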